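/- For all integers l and j with 2 ≤ l ≤ j, one has σ_{l,j+1} = −2·σ_{l,j}. -/

import Mathlib

open Finset

/-- The coefficient `σ_{l,j}` from the paper (there written `σ_{l,i+1}` with `j = i+1`):
`σ_{l,j} = (-1)^{j-1} Σ_{p=0}^{j-2} (-1)^{p+1} Σ_{q=0}^{p+1} (-1)^q C(j,q)(p+1-q)^{l-1}`. -/
def sigmaCoeff (l j : ℕ) : ℚ :=
  (-1) ^ (j - 1) * ∑ p ∈ Finset.range (j - 1), (-1 : ℚ) ^ (p + 1) *
    ∑ q ∈ Finset.range (p + 2), (-1 : ℚ) ^ q * (j.choose q : ℚ) * ((p + 1 - q : ℕ) : ℚ) ^ (l - 1)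

/-- The coefficient `χ_{l,j}` from the paper (there written `χ_{l,i+1}` with `j = i+1`):
`χ_{l,j} = (-1)^{j-l} Σ_{k=1}^{j-1} ((2^{j-1}-2^{j-1-k})/(k+1)) Σ_{m=0}^{k+1} (-1)^m C(k+1,m) m^l`. -/
def chiCoeff (l j : ℕ) : ℚ :=
  (-1) ^ (j - l) * ∑ k ∈ Finset.Icc 1 (j - 1),
    ((2 ^ (j - 1) - 2 ^ (j - 1 - k) : ℚ) / ((k : ℚ) + 1)) *
      ∑ m ∈ Finset.range (k + 2), (-1 : ℚ) ^ m * ((k + 1).choose m : ℚ) * (m : ℚ) ^ l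

/-- Iterated forward differences of `x ^ d` vanish after more than `d` steps. -/
lemma myFwdDiff_pow_eq_zero : ∀ d n : ℕ, d < n →
    (fwdDiff (1:ℚ))^[n] (fun x : ℚ => x ^ d) = 0 := by
  intro d
  induction d using Nat.strong_induction_on with
  | _ d IH =>
    intro n hn
    obtain ⟨m, rfl⟩ : ∃ m, n = m + 1 := ⟨n - 1, by omega⟩
    rw [Function.iterate_succ_apply]
    have hΔ : fwdDiff (1:ℚ) (fun x : ℚ => x ^ d)
        = ∑ k ∈ range d, ((d.choose k : ℚ)) • (fun x : ℚ => x ^ k) := by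
      ext x
      simp only [fwdDiff, Finset.sum_apply, Pi.smul_apply, smul_eq_mul]
      rw [add_pow, Finset.sum_range_succ]
      simp only [one_pow, mul_one, Nat.choose_self, Nat.cast_one, add_sub_cancel_right]
      exact Finset.sum_congr rfl fun k _ => by ring
    rw [hΔ, fwdDiff_iter_finset_sum]
    refine Finset.sum_eq_zero fun k hk => ?_
    have hkd := mem_range.mp hk
    rw [fwdDiff_iter_const_smul, IH k hkd m (by omega), smul_zero]

/-- The `n`-th finite difference of `x ↦ x ^ d` at `0`, written as an alternating
binomial sum, vanishes when `d < n`. -/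
lemma myAltSum (d n : ℕ) (hd : d < n) :
    ∑ q ∈ range (n + 1), (-1:ℚ)^q * (n.choose q : ℚ) * ((n - q : ℕ) : ℚ) ^ d = 0 := by
  have h := fwdDiff_iter_eq_sum_shift (1:ℚ) (fun x : ℚ => x ^ d) n 0
  rw [myFwdDiff_pow_eq_zero d n hd] at h
  simp only [Pi.zero_apply, zero_add, nsmul_eq_mul, mul_one, zsmul_eq_mul, Int.cast_mul,
    Int.cast_pow, Int.cast_neg, Int.cast_one, Int.cast_natCast] at h
  have hr := Finset.sum_range_reflect
    (fun k => (-1:ℚ)^(n-k) * (n.choose k : ℚ) * (k:ℚ)^d) (n+1)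
  rw [← h] at hr
  rw [← hr]
  refine Finset.sum_congr rfl fun q hq => ?_
  have hqn : q ≤ n := by simpa using Nat.lt_succ_iff.mp (mem_range.mp hq)
  simp only [Nat.add_sub_cancel]
  rw [Nat.sub_sub_self hqn, Nat.choose_symm hqn]

/-- The inner alternating sum appearing in `sigmaCoeff`. -/
def Baux (l j p : ℕ) : ℚ :=
  ∑ q ∈ Finset.range (p + 1), (-1:ℚ)^q * (j.choose q : ℚ) * ((p - q : ℕ) : ℚ) ^ (l - 1)

lemma Baux_zero (l j : ℕ) (hl : 2 ≤ l) : Baux l j 0 = 0 := by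
  simp [Baux, zero_pow, Nat.sub_ne_zero_of_lt (by omega : 1 < l)]

lemma Baux_shift (l j p : ℕ) : Baux l j (p+1)
    = (∑ q ∈ Finset.range (p+1), (-1:ℚ)^(q+1) * (j.choose (q+1) : ℚ) * ((p - q : ℕ):ℚ)^(l-1))
      + ((p + 1 : ℕ):ℚ)^(l-1) := by
  rw [Baux, Finset.sum_range_succ']
  simp [Nat.succ_sub_succ, Nat.add_sub_add_right]

/-- Pascal recursion for `Baux`. -/
lemma Baux_succ (l j p : ℕ) : Baux l (j+1) (p+1) = Baux l j (p+1) - Baux l j p := by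
  rw [Baux_shift l (j+1) p, Baux_shift l j p, Baux]
  rw [Finset.sum_congr rfl (fun q _ => show
      (-1:ℚ)^(q+1) * ((j+1).choose (q+1) : ℚ) * ((p - q : ℕ):ℚ)^(l-1)
      = (-1:ℚ)^(q+1) * (j.choose (q+1) : ℚ) * ((p - q : ℕ):ℚ)^(l-1)
        - (-1:ℚ)^q * (j.choose q : ℚ) * ((p - q : ℕ):ℚ)^(l-1) from by
    rw [Nat.choose_succ_succ]; push_cast; ring),
    Finset.sum_sub_distrib]
  ring

/-- Lemma `sigchirec`, first equality: `σ_{l,j+1} = -2 σ_{l,j}` for `2 ≤ l ≤ j`. -/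
theorem sigma_rec (l j : ℕ) (hl : 2 ≤ l) (hj : l ≤ j) :
    sigmaCoeff l (j + 1) = -2 * sigmaCoeff l j := by
  obtain ⟨m, rfl⟩ : ∃ m, j = m + 1 := ⟨j - 1, by omega⟩
  have hB : ∀ j' : ℕ, sigmaCoeff l j'
      = (-1:ℚ)^(j'-1) * ∑ p ∈ Finset.range (j'-1), (-1:ℚ)^(p+1) * Baux l j' (p+1) := by
    intro j'; rfl
  rw [hB, hB]
  simp only [Nat.add_sub_cancel]
  have h1 : ∑ p ∈ Finset.range (m+1), (-1:ℚ)^(p+1) * Baux l (m+1+1) (p+1)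
      = 2 * ∑ p ∈ Finset.range m, (-1:ℚ)^(p+1) * Baux l (m+1) (p+1) := by
    calc ∑ p ∈ Finset.range (m+1), (-1:ℚ)^(p+1) * Baux l (m+1+1) (p+1)
        = ∑ p ∈ Finset.range (m+1), ((-1:ℚ)^(p+1) * Baux l (m+1) (p+1)
            - (-1:ℚ)^(p+1) * Baux l (m+1) p) := by
          refine Finset.sum_congr rfl fun p _ => ?_
          rw [Baux_succ]; ring
      _ = (∑ p ∈ Finset.range (m+1), (-1:ℚ)^(p+1) * Baux l (m+1) (p+1))
            - ∑ p ∈ Finset.range (m+1), (-1:ℚ)^(p+1) * Baux l (m+1) p :=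
          Finset.sum_sub_distrib _ _
      _ = 2 * ∑ p ∈ Finset.range m, (-1:ℚ)^(p+1) * Baux l (m+1) (p+1) := by
          rw [Finset.sum_range_succ, Finset.sum_range_succ']
          have hz : Baux l (m+1) (m+1) = 0 := myAltSum (l-1) (m+1) (by omega)
          have h0 : Baux l (m+1) 0 = 0 := Baux_zero l (m+1) hl
          rw [hz, h0]
          rw [Finset.sum_congr rfl (fun p _ => show
            (-1:ℚ)^(p+1+1) * Baux l (m+1) (p+1)
              = -((-1:ℚ)^(p+1) * Baux l (m+1) (p+1)) from by ring),
            Finset.sum_neg_distrib]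
          ring
  rw [h1]
  ring
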